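/- For every prime quadratic module M in M_n(R), a symmetric matrix A = [a_ij] belongs to supp M = M ∩ (−M) if and only if all entries a_ij belong to the prime ideal p(supp M); that is, supp M = S_n(p(supp M)). -/

import Mathlib

open Matrix

/-- A quadratic module in `M_n(R)`. -/
def IsQM {n : ℕ} {R : Type*} [CommRing R] (M : Set (Matrix (Fin n) (Fin n) R)) : Prop :=
  (∀ A ∈ M, A.IsSymm) ∧ (1 : Matrix (Fin n) (Fin n) R) ∈ M ∧
  (∀ a ∈ M, ∀ b ∈ M, a + b ∈ M) ∧
  ∀ (A : Matrix (Fin n) (Fin n) R), ∀ m ∈ M, Aᵀ * m * A ∈ M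

/-- A prime quadratic module in `M_n(R)`. -/
def IsPrimeQM {n : ℕ} {R : Type*} [CommRing R] (M : Set (Matrix (Fin n) (Fin n) R)) : Prop :=
  IsQM M ∧ -(1 : Matrix (Fin n) (Fin n) R) ∉ M ∧
  ∀ (A : Matrix (Fin n) (Fin n) R) (r : R), A.IsSymm → r ^ 2 • A ∈ M →
    A ∈ M ∨ r • (1 : Matrix (Fin n) (Fin n) R) ∈ M ∩ (-M)

theorem aux_apply {n : ℕ} {R : Type*} [CommRing R] (i j : Fin n) (c : R) (u v : Fin n) :
    Matrix.single i j c u v = if i = u ∧ j = v then c else 0 := rfl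

theorem aux_transpose {n : ℕ} {R : Type*} [CommRing R] (i j : Fin n) (c : R) :
    (Matrix.single i j c)ᵀ = Matrix.single j i c := by
  ext u v
  rw [Matrix.transpose_apply, aux_apply, aux_apply]; exact if_congr and_comm rfl rfl

theorem aux_neg {n : ℕ} {R : Type*} [CommRing R] (i j : Fin n) (c : R) :
    -(Matrix.single i j c) = Matrix.single i j (-c) := by
  ext u v
  rw [Matrix.neg_apply, aux_apply, aux_apply]
  split_ifs <;> simp

theorem aux_mul {n : ℕ} {R : Type*} [CommRing R] (B : Matrix (Fin n) (Fin n) R)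
    (i k j l : Fin n) (c d : R) :
    (Matrix.single i k c)ᵀ * B * (Matrix.single j l d) = Matrix.single k l (c * B i j * d) := by
  ext u v
  simp [Matrix.mul_apply, Matrix.single, Matrix.transpose_apply, ite_and,
    Finset.sum_ite_eq, Finset.sum_ite_eq', mul_comm, mul_assoc, mul_left_comm]
  split_ifs <;> simp_all

theorem aux_diag {n : ℕ} {R : Type*} [CommRing R] (c : R) :
    ∑ k : Fin n, Matrix.single k k c = c • (1 : Matrix (Fin n) (Fin n) R) := by
  ext u v
  simp [Matrix.sum_apply, Matrix.single, Matrix.one_apply, ite_and]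

set_option maxHeartbeats 1000000 in
theorem stmt10 {n : ℕ} [NeZero n] {R : Type*} [CommRing R]
    (M : Set (Matrix (Fin n) (Fin n) R)) (hM : IsPrimeQM M) :
    M ∩ (-M) = {A : Matrix (Fin n) (Fin n) R | A.IsSymm ∧
      ∀ i j, A i j ∈ (fun B : Matrix (Fin n) (Fin n) R => B 0 0) '' (M ∩ (-M))} := by
  obtain ⟨⟨hsymm, hone, hadd, hcong⟩, hneg1, hprime⟩ := hM
  have mem_supp : ∀ X : Matrix (Fin n) (Fin n) R, X ∈ M ∩ (-M) ↔ X ∈ M ∧ -X ∈ M := by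
    intro X
    simp [Set.mem_inter_iff, Set.mem_neg]
  have supp_add : ∀ {X Y : Matrix (Fin n) (Fin n) R},
      X ∈ M ∩ (-M) → Y ∈ M ∩ (-M) → X + Y ∈ M ∩ (-M) := by
    intro X Y hX hY
    rw [mem_supp] at *
    exact ⟨hadd _ hX.1 _ hY.1, by rw [neg_add]; exact hadd _ hX.2 _ hY.2⟩
  have supp_neg : ∀ {X : Matrix (Fin n) (Fin n) R}, X ∈ M ∩ (-M) → -X ∈ M ∩ (-M) := by
    intro X hX
    rw [mem_supp] at *
    exact ⟨hX.2, by simpa using hX.1⟩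
  have supp_zero : (0 : Matrix (Fin n) (Fin n) R) ∈ M ∩ (-M) := by
    have h0 : (0 : Matrix (Fin n) (Fin n) R)ᵀ * 1 * 0 ∈ M := hcong 0 1 hone
    rw [mem_supp]
    constructor <;> simpa using h0
  have supp_congr : ∀ (P : Matrix (Fin n) (Fin n) R) {X : Matrix (Fin n) (Fin n) R},
      X ∈ M ∩ (-M) → Pᵀ * X * P ∈ M ∩ (-M) := by
    intro P X hX
    rw [mem_supp] at *
    refine ⟨hcong P X hX.1, ?_⟩
    have := hcong P (-X) hX.2
    simpa [Matrix.mul_neg, Matrix.neg_mul] using this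
  have supp_polar : ∀ (P Q : Matrix (Fin n) (Fin n) R) {X : Matrix (Fin n) (Fin n) R},
      X ∈ M ∩ (-M) → Pᵀ * X * Q + Qᵀ * X * P ∈ M ∩ (-M) := by
    intro P Q X hX
    have h1 := supp_congr (P + Q) hX
    have h2 := supp_neg (supp_congr P hX)
    have h3 := supp_neg (supp_congr Q hX)
    have key : Pᵀ * X * Q + Qᵀ * X * P
        = (P + Q)ᵀ * X * (P + Q) + -(Pᵀ * X * P) + -(Qᵀ * X * Q) := by
      rw [Matrix.transpose_add]
      noncomm_ring
    rw [key]
    exact supp_add (supp_add h1 h2) h3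
  have supp_sum : ∀ (s : Finset (Fin n)) (f : Fin n → Matrix (Fin n) (Fin n) R),
      (∀ i ∈ s, f i ∈ M ∩ (-M)) → ∑ i ∈ s, f i ∈ M ∩ (-M) := by
    intro s f h
    exact Finset.sum_induction f (· ∈ M ∩ (-M)) (fun a b ha hb => supp_add ha hb) supp_zero h
  have hJT : ∀ b : R, b ∈ (fun B : Matrix (Fin n) (Fin n) R => B 0 0) '' (M ∩ (-M)) →
      b • (1 : Matrix (Fin n) (Fin n) R) ∈ M ∩ (-M) := by
    rintro b ⟨B, hB, rfl⟩
    have hk : ∀ k : Fin n, (Matrix.single (0 : Fin n) k 1)ᵀ * B * (Matrix.single (0 : Fin n) k 1)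
        = Matrix.single k k (B 0 0) := by
      intro k
      rw [aux_mul, one_mul, mul_one]
    have hsum := supp_sum Finset.univ
      (fun k => (Matrix.single (0 : Fin n) k 1)ᵀ * B * (Matrix.single (0 : Fin n) k 1))
      (fun k _ => supp_congr _ hB)
    rw [Finset.sum_congr rfl (fun k _ => hk k), aux_diag] at hsum
    exact hsum
  ext A
  simp only [Set.mem_setOf_eq]
  constructor
  · -- forward direction
    intro hA
    refine ⟨hsymm A hA.1, ?_⟩
    intro i j
    by_cases hij : i = j
    · subst hij
      refine ⟨(Matrix.single i (0 : Fin n) 1)ᵀ * A * (Matrix.single i (0 : Fin n) 1),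
        supp_congr _ hA, ?_⟩
      rw [aux_mul, one_mul, mul_one]
      simp [aux_apply]
    · -- off-diagonal entry
      have haji : A j i = A i j := by
        have hs := hsymm A hA.1
        rw [Matrix.IsSymm] at hs
        calc A j i = Aᵀ i j := rfl
        _ = A i j := by rw [hs]
      set a := A i j with ha
      have hBsupp : a ^ 2 • (Matrix.single i j 1 + Matrix.single j i 1) ∈ M ∩ (-M) := by
        have h := supp_polar (Matrix.single i i 1) (Matrix.single j j a) hA
        rw [aux_mul, aux_mul] at h
        have e : a ^ 2 • (Matrix.single i j 1 + Matrix.single j i 1)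
            = Matrix.single i j (1 * A i j * a) + Matrix.single j i (a * A j i * 1) := by
          rw [smul_add, Matrix.smul_single, Matrix.smul_single, haji, ← ha,
            smul_eq_mul, mul_one, one_mul, mul_one]
          rw [show a ^ 2 = a * a from sq a]
        rw [e]
        exact h
      have hCsymm : (Matrix.single i j 1 + Matrix.single j i 1 :
          Matrix (Fin n) (Fin n) R).IsSymm := by
        rw [Matrix.IsSymm, Matrix.transpose_add, aux_transpose, aux_transpose, add_comm]
      have h1 := hprime _ a hCsymm ((mem_supp _).1 hBsupp).1
      have h2 := hprime (-(Matrix.single i j 1 + Matrix.single j i 1)) a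
        (by rw [Matrix.IsSymm, Matrix.transpose_neg, hCsymm])
        (by rw [smul_neg]; exact ((mem_supp _).1 hBsupp).2)
      rcases h1 with h1 | h1
      swap
      · exact ⟨a • 1, h1, by simp [Matrix.smul_apply, Matrix.one_apply]⟩
      rcases h2 with h2 | h2
      swap
      · exact ⟨a • 1, h2, by simp [Matrix.smul_apply, Matrix.one_apply]⟩
      -- both C ∈ M and -C ∈ M : contradiction
      exfalso
      have hk : ∀ k : Fin n,
          (Matrix.single i k 1 + Matrix.single j k 1)ᵀ *
            (-(Matrix.single i j 1 + Matrix.single j i 1)) *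
            (Matrix.single i k 1 + Matrix.single j k 1) = Matrix.single k k (-2 : R) := by
        intro k
        have expand : ∀ u v : Fin n,
            (Matrix.single u k 1)ᵀ * (Matrix.single i j 1 + Matrix.single j i 1) *
              (Matrix.single v k 1) = Matrix.single k k
                ((Matrix.single i j 1 + Matrix.single j i 1 : Matrix (Fin n) (Fin n) R) u v) := by
          intro u v
          rw [aux_mul, one_mul, mul_one]
        have e0 : (Matrix.single i k (1:R) + Matrix.single j k (1:R))ᵀ *
            (-(Matrix.single i j (1:R) + Matrix.single j i (1:R))) *
            (Matrix.single i k (1:R) + Matrix.single j k (1:R))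
            = -((Matrix.single i k (1:R))ᵀ * (Matrix.single i j (1:R) + Matrix.single j i (1:R)) *
                (Matrix.single i k (1:R)))
              + -((Matrix.single i k (1:R))ᵀ * (Matrix.single i j (1:R) + Matrix.single j i (1:R)) *
                (Matrix.single j k (1:R)))
              + -((Matrix.single j k (1:R))ᵀ * (Matrix.single i j (1:R) + Matrix.single j i (1:R)) *
                (Matrix.single i k (1:R)))
              + -((Matrix.single j k (1:R))ᵀ * (Matrix.single i j (1:R) + Matrix.single j i (1:R)) *
                (Matrix.single j k (1:R))) := by
          rw [Matrix.transpose_add]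
          noncomm_ring
        rw [e0]
        rw [expand i i, expand i j, expand j i, expand j j]
        have cii : (Matrix.single i j 1 + Matrix.single j i 1 : Matrix (Fin n) (Fin n) R) i i = 0 := by
          rw [Matrix.add_apply, aux_apply, aux_apply]
          simp [hij, Ne.symm hij]
        have cij : (Matrix.single i j 1 + Matrix.single j i 1 : Matrix (Fin n) (Fin n) R) i j = 1 := by
          rw [Matrix.add_apply, aux_apply, aux_apply]
          simp [hij, Ne.symm hij]
        have cji : (Matrix.single i j 1 + Matrix.single j i 1 : Matrix (Fin n) (Fin n) R) j i = 1 := by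
          rw [Matrix.add_apply, aux_apply, aux_apply]
          simp [hij, Ne.symm hij]
        have cjj : (Matrix.single i j 1 + Matrix.single j i 1 : Matrix (Fin n) (Fin n) R) j j = 0 := by
          rw [Matrix.add_apply, aux_apply, aux_apply]
          simp [hij, Ne.symm hij]
        rw [cii, cij, cji, cjj]
        simp only [Matrix.single_zero, neg_zero, zero_add, add_zero, aux_neg,
          ← Matrix.single_add]
        norm_num
      have hsum : ∑ k : Fin n, (Matrix.single i k 1 + Matrix.single j k 1)ᵀ *
            (-(Matrix.single i j 1 + Matrix.single j i 1)) *
            (Matrix.single i k 1 + Matrix.single j k 1) ∈ M ∩ (-M) :=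
        supp_sum Finset.univ _ (fun k _ => supp_congr _ ((mem_supp _).2 ⟨h2, by simpa using h1⟩))
      rw [Finset.sum_congr rfl (fun k _ => hk k), aux_diag] at hsum
      have hfinal : -(1 : Matrix (Fin n) (Fin n) R) = 1 + (-2 : R) • 1 := by
        ext u v
        rw [Matrix.add_apply, Matrix.smul_apply, Matrix.neg_apply, Matrix.one_apply]
        split_ifs <;> simp <;> ring
      exact hneg1 (hfinal ▸ hadd _ hone _ ((mem_supp _).1 hsum).1)
  · -- reverse direction
    rintro ⟨hAs, hAe⟩
    have hT : ∀ i j : Fin n, (A i j) • (1 : Matrix (Fin n) (Fin n) R) ∈ M ∩ (-M) :=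
      fun i j => hJT _ (hAe i j)
    have hsmul_diag : ∀ (c : R) (u : Fin n), (c • (1 : Matrix (Fin n) (Fin n) R)) u u = c := by
      intro c u
      rw [Matrix.smul_apply, Matrix.one_apply_eq, smul_eq_mul, mul_one]
    set F : Fin n → Fin n → Matrix (Fin n) (Fin n) R := fun i j =>
      if i = j then Matrix.single i i (A i i)
      else if i < j then Matrix.single i j (A i j) + Matrix.single j i (A i j)
      else 0 with hF
    have hFsupp : ∀ i j, F i j ∈ M ∩ (-M) := by
      intro i j
      rw [hF]
      by_cases h1 : i = j
      · subst h1
        simp only [if_pos rfl]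
        have h := supp_congr (Matrix.single i i 1) (hT i i)
        rw [aux_mul, one_mul, mul_one, hsmul_diag] at h
        exact h
      · by_cases h2 : i < j
        · simp only [if_neg h1, if_pos h2]
          have h := supp_polar (Matrix.single i i 1) (Matrix.single i j 1) (hT i j)
          rw [aux_mul, aux_mul, one_mul, mul_one, hsmul_diag] at h
          exact h
        · simp only [if_neg h1, if_neg h2]
          exact supp_zero
    have hsymm' : ∀ u v : Fin n, A v u = A u v := by
      intro u v
      rw [Matrix.IsSymm] at hAs
      calc A v u = Aᵀ u v := rfl
      _ = A u v := by rw [hAs]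
    have hsum : A = ∑ i : Fin n, ∑ j : Fin n, F i j := by
      ext u v
      rw [Matrix.sum_apply]
      simp only [Matrix.sum_apply]
      have hFuv : ∀ i j : Fin n, (F i j) u v
          = (if j = v ∧ (i = u ∧ i ≤ j) then A i j else 0)
            + (if j = u ∧ (i = v ∧ i < j) then A i j else 0) := by
        intro i j
        rw [hF]
        by_cases h1 : i = j
        · subst h1
          simp only [if_pos rfl, aux_apply]
          by_cases hu : i = u <;> by_cases hv : i = v <;>
            simp_all [lt_irrefl, le_refl]
        · by_cases h2 : i < j
          · simp only [if_neg h1, if_pos h2, Matrix.add_apply, aux_apply]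
            have h3 : i ≤ j := le_of_lt h2
            by_cases hu : i = u <;> by_cases hv : j = v <;>
              by_cases hu' : j = u <;> by_cases hv' : i = v <;>
              simp_all
          · simp only [if_neg h1, if_neg h2, Matrix.zero_apply]
            have h3 : ¬ i ≤ j := fun hle => h2 (lt_of_le_of_ne hle h1)
            simp [h2, h3]
      rw [Finset.sum_congr rfl (fun i _ => Finset.sum_congr rfl (fun j _ => hFuv i j))]
      simp only [Finset.sum_add_distrib, ite_and, Finset.sum_ite_eq, Finset.sum_ite_eq',
        Finset.mem_univ, if_true]
      rcases lt_trichotomy u v with h | h | h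
      · rw [if_pos (le_of_lt h), if_neg (not_lt_of_gt h), add_zero]
      · subst h
        rw [if_pos (le_refl u), if_neg (lt_irrefl u), add_zero]
      · rw [if_neg (not_le_of_gt h), if_pos h, zero_add, hsymm' u v]
    rw [hsum]
    exact supp_sum Finset.univ _ (fun i _ => supp_sum Finset.univ _ (fun j _ => hFsupp i j))
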